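/- (Theorem 1(i)) Let A ⊆ ℝⁿ be a bounded closed set with 0 ∈ A ⊆ B₁ and Ω := ℝⁿ \ A. Let u be continuous on the closure of Ω and infinity harmonic in Ω with limsup_{x→∞} |u(x)|/|x| < +∞. If S_∞ = 0, then m⁻ ≤ u(x) ≤ m⁺ for all x ∈ Ω. -/

import Mathlib

open Metric Set Filter Bornology Topology
open scoped RealInnerProductSpace

noncomputable section

/-- Euclidean space ℝⁿ. -/
abbrev Euc (n : ℕ) := EuclideanSpace ℝ (Fin n)

/-- Comparison with cones from above (infinity subharmonic). -/
def CmpAbove {n : ℕ} (Ω : Set (Euc n)) (u : Euc n → ℝ) : Prop :=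
  ∀ V : Set (Euc n), IsOpen V → IsBounded V → closure V ⊆ Ω →
    ∀ (x₀ : Euc n) (a b : ℝ),
      (∀ x ∈ frontier (V \ {x₀}), u x ≤ a * ‖x - x₀‖ + b) →
      ∀ x ∈ V, u x ≤ a * ‖x - x₀‖ + b

/-- Comparison with cones from below (infinity superharmonic). -/
def CmpBelow {n : ℕ} (Ω : Set (Euc n)) (u : Euc n → ℝ) : Prop :=
  ∀ V : Set (Euc n), IsOpen V → IsBounded V → closure V ⊆ Ω →
    ∀ (x₀ : Euc n) (a b : ℝ),
      (∀ x ∈ frontier (V \ {x₀}), a * ‖x - x₀‖ + b ≤ u x) →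
      ∀ x ∈ V, a * ‖x - x₀‖ + b ≤ u x

/-- Infinity harmonic = comparison with cones from both sides. -/
def InfHarmonic {n : ℕ} (Ω : Set (Euc n)) (u : Euc n → ℝ) : Prop :=
  CmpAbove Ω u ∧ CmpBelow Ω u

/-- m⁺ = max of u on ∂Ω. -/
def mP {n : ℕ} (Ω : Set (Euc n)) (u : Euc n → ℝ) : ℝ := sSup (u '' frontier Ω)

/-- m⁻ = min of u on ∂Ω. -/
def mM {n : ℕ} (Ω : Set (Euc n)) (u : Euc n → ℝ) : ℝ := sInf (u '' frontier Ω)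

/-- S⁺_r := (max(max_{∂B_r} u, m⁺) − m⁺)/r. -/
def SP {n : ℕ} (Ω : Set (Euc n)) (u : Euc n → ℝ) (r : ℝ) : ℝ :=
  (max (sSup (u '' sphere (0 : Euc n) r)) (mP Ω u) - mP Ω u) / r

/-- S⁻_r := (m⁻ − min(min_{∂B_r} u, m⁻))/r. -/
def SM {n : ℕ} (Ω : Set (Euc n)) (u : Euc n → ℝ) (r : ℝ) : ℝ :=
  (mM Ω u - min (sInf (u '' sphere (0 : Euc n) r)) (mM Ω u)) / r

/-- Lip(u, S) := sup_{x≠y ∈ S} |u(x) − u(y)|/|x − y|. -/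
def lipOn {n : ℕ} (u : Euc n → ℝ) (S : Set (Euc n)) : ℝ :=
  sSup ((fun p : Euc n × Euc n => |u p.1 - u p.2| / ‖p.1 - p.2‖) ''
    {p : Euc n × Euc n | p.1 ∈ S ∧ p.2 ∈ S ∧ p.1 ≠ p.2})

/-- Theorem 1(i): if S_∞ = 0 then m⁻ ≤ u ≤ m⁺ in Ω. -/

private lemma real_sSup_neg (s : Set ℝ) : sSup (-s) = -sInf s := by
  rw [Real.sInf_def, neg_neg]

private lemma neg_image {n : ℕ} (u : Euc n → ℝ) (F : Set (Euc n)) :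
    (fun x => -u x) '' F = -(u '' F) := by
  ext y
  simp only [Set.mem_image, Set.mem_neg]
  constructor
  · rintro ⟨z, hz, rfl⟩; exact ⟨z, hz, by ring⟩
  · rintro ⟨z, hz, hzz⟩; exact ⟨z, hz, by linarith⟩

private lemma key {n : ℕ} (A : Set (Euc n)) (hAcl : IsClosed A) (hAbd : IsBounded A)
    (h0A : (0 : Euc n) ∈ A) (hA1 : A ⊆ ball 0 1)
    (u : Euc n → ℝ) (hu : ContinuousOn u (closure Aᶜ)) (hca : CmpAbove Aᶜ u)
    (Sp : ℝ) (hSp : Tendsto (SP Aᶜ u) atTop (𝓝 Sp)) (hSple : Sp ≤ 0) :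
    ∀ x ∈ Aᶜ, u x ≤ mP Aᶜ u := by
  intro x hx
  rcases subsingleton_or_nontrivial (Euc n) with hsub | hnt
  · exact absurd (by rw [Subsingleton.elim x 0]; exact h0A) hx
  -- basic facts
  have hAcomp : IsCompact A := isCompact_of_isClosed_isBounded hAcl hAbd
  have hAne : A.Nonempty := ⟨0, h0A⟩
  have hFc : IsCompact (frontier A) :=
    hAcomp.of_isClosed_subset isClosed_frontier hAcl.frontier_subset
  have hFsub : frontier A ⊆ closure Aᶜ := by
    rw [← frontier_compl]; exact frontier_subset_closure
  have hbdF : BddAbove (u '' frontier A) :=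
    (hFc.image_of_continuousOn (hu.mono hFsub)).bddAbove
  have hmPle : ∀ y ∈ frontier A, u y ≤ mP Aᶜ u := by
    intro y hy
    rw [mP, frontier_compl]
    exact le_csSup hbdF ⟨y, hy, rfl⟩
  have hdx : 0 < infDist x A := (hAcl.notMem_iff_infDist_pos hAne).mp hx
  -- Sp = 0
  have hSp0 : Sp = 0 := by
    refine le_antisymm hSple (ge_of_tendsto hSp ?_)
    filter_upwards [eventually_ge_atTop (1 : ℝ)] with r hr
    exact div_nonneg (sub_nonneg.mpr (le_max_right _ _)) (by linarith)
  refine le_of_forall_pos_le_add ?_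
  intro δ hδ
  -- uniform continuity
  set K := closure Aᶜ ∩ closedBall (0 : Euc n) 2 with hKdef
  have hKc : IsCompact K := isCompact_of_isClosed_isBounded
    (isClosed_closure.inter isClosed_closedBall)
    ((isBounded_closedBall).subset inter_subset_right)
  obtain ⟨η, hη, hηd⟩ := uniformContinuousOn_iff.mp
    (hKc.uniformContinuousOn_of_continuous (hu.mono inter_subset_left)) δ hδ
  set ε := min (min (η / 2) (infDist x A / 2)) (1 / 2) with hεdef
  have hε : 0 < ε := lt_min (lt_min (by linarith) (by linarith)) (by norm_num)
  have hεη : ε < η := lt_of_le_of_lt ((min_le_left _ _).trans (min_le_left _ _)) (by linarith)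
  have hεx : ε < infDist x A :=
    lt_of_le_of_lt ((min_le_left _ _).trans (min_le_right _ _)) (by linarith)
  have hε1 : ε ≤ 1 / 2 := min_le_right _ _
  -- boundary layer bound
  have hbdry : ∀ y : Euc n, infDist y A = ε → u y ≤ mP Aᶜ u + δ := by
    intro y hy
    obtain ⟨a, haA, hda⟩ := hAcomp.exists_infDist_eq_dist hAne y
    have hya : dist y a = ε := by rw [← hda, hy]
    have haCl : a ∈ closure Aᶜ := by
      have h1 : Tendsto (fun k : ℕ => (1 / (k + 1) : ℝ)) atTop (𝓝 0) :=
        tendsto_one_div_add_atTop_nhds_zero_nat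
      have htend : Tendsto (fun k : ℕ => a + (1 / (k + 1) : ℝ) • (y - a)) atTop (𝓝 a) := by
        have := (h1.smul_const (y - a)).const_add a
        simpa using this
      refine mem_closure_of_tendsto htend ?_
      filter_upwards with k
      show a + (1 / (k + 1) : ℝ) • (y - a) ∈ Aᶜ
      intro hmem
      have ht0 : (0 : ℝ) < 1 / (k + 1 : ℝ) := by positivity
      have ht1 : (1 / (k + 1 : ℝ)) ≤ 1 := by
        rw [div_le_one (by positivity)]; linarith [Nat.cast_nonneg (α := ℝ) k]
      have hdist : dist y (a + (1 / (k + 1) : ℝ) • (y - a)) = (1 - 1 / (k + 1 : ℝ)) * ε := by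
        rw [dist_eq_norm]
        have : y - (a + (1 / (k + 1) : ℝ) • (y - a)) = (1 - 1 / (k + 1 : ℝ)) • (y - a) := by
          module
        rw [this, norm_smul, Real.norm_eq_abs, abs_of_nonneg (by linarith),
          ← dist_eq_norm, hya]
      have hle := infDist_le_dist_of_mem hmem (x := y)
      rw [hdist, hy] at hle
      nlinarith
    have haF : a ∈ frontier A := by
      rw [frontier_eq_closure_inter_closure]
      exact ⟨subset_closure haA, haCl⟩
    have hyA : y ∉ A := by
      intro h
      rw [infDist_zero_of_mem h] at hy
      linarith
    have ha0 : dist a 0 < 1 := by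
      have := hA1 haA; rwa [mem_ball] at this
    have hyK : y ∈ K := by
      refine ⟨subset_closure hyA, ?_⟩
      rw [mem_closedBall]
      calc dist y 0 ≤ dist y a + dist a 0 := dist_triangle _ _ _
        _ ≤ 1 / 2 + 1 := by rw [hya]; linarith
        _ ≤ 2 := by norm_num
    have haK : a ∈ K := ⟨hFsub haF, by rw [mem_closedBall]; linarith⟩
    have := hηd y hyK a haK (by rw [hya]; exact hεη)
    rw [Real.dist_eq] at this
    have h2 := abs_lt.mp this
    have := hmPle a haF
    linarith [h2.1, h2.2]
  -- sphere bound
  have hsph : ∀ r : ℝ, 2 ≤ r → ∀ y : Euc n, ‖y‖ = r → u y ≤ sSup (u '' sphere (0 : Euc n) r) := by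
    intro r hr y hyr
    have hsubc : sphere (0 : Euc n) r ⊆ closure Aᶜ := by
      intro z hz
      refine subset_closure fun hzA => ?_
      have h1 := hA1 hzA
      rw [mem_ball, dist_zero_right] at h1
      rw [mem_sphere_zero_iff_norm] at hz
      linarith
    exact le_csSup (((isCompact_sphere _ _).image_of_continuousOn (hu.mono hsubc)).bddAbove)
      ⟨y, mem_sphere_zero_iff_norm.mpr hyr, rfl⟩
  -- main estimate for each large r
  have hmain : ∀ᶠ r in atTop, u x ≤ SP Aᶜ u r * ‖x‖ + (mP Aᶜ u + δ) := by
    filter_upwards [eventually_ge_atTop (max (‖x‖ + 1) 2)] with r hr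
    have hr2 : 2 ≤ r := le_trans (le_max_right _ _) hr
    have hrx : ‖x‖ < r := by have := le_trans (le_max_left _ _) hr; linarith
    have hr0 : (0 : ℝ) < r := by linarith
    have hSPr : 0 ≤ SP Aᶜ u r := div_nonneg (sub_nonneg.mpr (le_max_right _ _)) hr0.le
    set V := ball (0 : Euc n) r ∩ {y : Euc n | ε < infDist y A} with hVdef
    have hVo : IsOpen V := isOpen_ball.inter (isOpen_lt continuous_const (continuous_infDist_pt A))
    have hVb : IsBounded V := (isBounded_ball).subset inter_subset_left
    have hclV : ∀ y ∈ closure V, ‖y‖ ≤ r ∧ ε ≤ infDist y A := by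
      intro y hy
      have h1 : y ∈ closure (ball (0 : Euc n) r) :=
        closure_mono inter_subset_left hy
      have h2 : y ∈ closure {y : Euc n | ε < infDist y A} :=
        closure_mono inter_subset_right hy
      constructor
      · rw [closure_ball 0 (ne_of_gt hr0), mem_closedBall, dist_zero_right] at h1
        exact h1
      · have h3 : closure {y : Euc n | ε < infDist y A} ⊆ {y : Euc n | ε ≤ infDist y A} :=
          closure_minimal (fun z (hz : ε < infDist z A) => (le_of_lt hz : ε ≤ infDist z A))
            (isClosed_le continuous_const (continuous_infDist_pt A))
        exact h3 h2
    have hVsub : closure V ⊆ Aᶜ := by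
      intro y hy hyA
      have := (hclV y hy).2
      rw [infDist_zero_of_mem hyA] at this
      linarith
    have h0V : (0 : Euc n) ∉ V := by
      intro h
      have := h.2
      rw [mem_setOf_eq, infDist_zero_of_mem h0A] at this
      linarith
    have hVd : V \ {(0 : Euc n)} = V := diff_singleton_eq_self h0V
    have hfr : ∀ y ∈ frontier (V \ {(0 : Euc n)}), u y ≤ SP Aᶜ u r * ‖y - 0‖ + (mP Aᶜ u + δ) := by
      rw [hVd]
      intro y hy
      rw [frontier, hVo.interior_eq] at hy
      obtain ⟨hyc, hyn⟩ := hy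
      obtain ⟨h1, h2⟩ := hclV y hyc
      rw [sub_zero]
      by_cases hcase : infDist y A = ε
      · have hb := hbdry y hcase
        have hnn : 0 ≤ SP Aᶜ u r * ‖y‖ := mul_nonneg hSPr (norm_nonneg y)
        linarith
      · have hεlt : ε < infDist y A := lt_of_le_of_ne h2 (Ne.symm hcase)
        have hyr : ‖y‖ = r := by
          by_contra hne
          exact hyn ⟨mem_ball.mpr (by rw [dist_zero_right]; exact lt_of_le_of_ne h1 hne), hεlt⟩
        have h3 := hsph r hr2 y hyr
        have h5 : max (sSup (u '' sphere (0 : Euc n) r)) (mP Aᶜ u) = SP Aᶜ u r * r + mP Aᶜ u := by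
          rw [SP]; field_simp; ring
        have h6 := h3.trans ((le_max_left _ _).trans_eq h5)
        rw [hyr]
        linarith
    have hest := hca V hVo hVb hVsub 0 (SP Aᶜ u r) (mP Aᶜ u + δ) hfr x
      ⟨mem_ball.mpr (by rw [dist_zero_right]; exact hrx), hεx⟩
    rw [sub_zero] at hest
    exact hest
  -- take the limit
  have hlim : Tendsto (fun r => SP Aᶜ u r * ‖x‖ + (mP Aᶜ u + δ)) atTop
      (𝓝 (0 * ‖x‖ + (mP Aᶜ u + δ))) := by
    refine Tendsto.add_const _ (Tendsto.mul_const _ ?_)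
    rwa [hSp0] at hSp
  have := ge_of_tendsto hlim hmain
  linarith [this]


theorem stmt4 {n : ℕ} (A : Set (Euc n)) (hAcl : IsClosed A) (hAbd : IsBounded A)
    (h0A : (0 : Euc n) ∈ A) (hA1 : A ⊆ ball 0 1)
    (u : Euc n → ℝ) (hu : ContinuousOn u (closure Aᶜ)) (hIH : InfHarmonic Aᶜ u)
    (hgrow : IsBoundedUnder (· ≤ ·) (cobounded (Euc n)) fun x => |u x| / ‖x‖)
    (Sp Sm : ℝ) (hSp : Tendsto (SP Aᶜ u) atTop (𝓝 Sp))
    (hSm : Tendsto (SM Aᶜ u) atTop (𝓝 Sm)) (hS : max Sp Sm = 0) :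
    ∀ x ∈ Aᶜ, mM Aᶜ u ≤ u x ∧ u x ≤ mP Aᶜ u := by
  intro x hx
  refine ⟨?_, key A hAcl hAbd h0A hA1 u hu hIH.1 Sp hSp
    (by have := le_max_left Sp Sm; rw [hS] at this; exact this) x hx⟩
  -- lower bound via -u
  have hca : CmpAbove Aᶜ (fun y => -u y) := by
    intro V hVo hVb hVs x₀ a b hb z hzV
    have := hIH.2 V hVo hVb hVs x₀ (-a) (-b)
      (fun w hw => by have := hb w hw; simp only at this ⊢; linarith) z hzV
    simp only [neg_mul] at this
    show -u z ≤ a * ‖z - x₀‖ + b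
    linarith
  have himg : mP Aᶜ (fun y => -u y) = -mM Aᶜ u := by
    rw [mP, mM, neg_image, real_sSup_neg]
  have hSPeq : SP Aᶜ (fun y => -u y) = SM Aᶜ u := by
    funext r
    simp only [SP, SM, himg, neg_image, real_sSup_neg, max_neg_neg]
    ring
  have hkey2 := key A hAcl hAbd h0A hA1 (fun y => -u y) hu.neg hca Sm
    (by rw [hSPeq]; exact hSm)
    (by have := le_max_right Sp Sm; rw [hS] at this; exact this) x hx
  rw [himg] at hkey2
  linarith
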